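/- arXiv:2005.12602 — 6 statements merged into one kernel-verified Lean document; each statement's English description precedes it below -/
import Mathlib

section
/- Let A be the 3×3 real matrix with rows (a, b, υ-a-b), (c, d, υ-c-d), (e, f, υ-e-f), where υ ≠ 0. Suppose α₁ ≠ 2υ and α₁² = 4α₀, where α₀ = det(A)/υ and α₁ = tr(A) - υ. Then the eigenvalue α₁/2 (which has algebraic multiplicity 2) has geometric multiplicity 2, i.e. A is diagonalizable, if and only if c = e, b = f, and d - a + e - f = 0. -/
open Polynomial Matrix

/-- with entries parametrized as rows `(a,b,υ-a-b)`, `(c,d,υ-c-d)`,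
`(e,f,υ-e-f)`, if `α₁ ≠ 2υ` and `α₁² = 4α₀`, the eigenvalue `α₁/2` has algebraic
multiplicity 2, and it has geometric multiplicity 2 iff `c = e`, `b = f` and
`d - a + e - f = 0`. -/
theorem stmt_4 (a b c d e f υ : ℝ) (hυ : υ ≠ 0)
    (A : Matrix (Fin 3) (Fin 3) ℝ)
    (hA : A = !![a, b, υ - a - b; c, d, υ - c - d; e, f, υ - e - f])
    (α₀ α₁ : ℝ) (hα₀ : α₀ = A.det / υ) (hα₁ : α₁ = A.trace - υ)
    (h1 : α₁ ≠ 2 * υ) (h2 : α₁ ^ 2 = 4 * α₀) :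
    A.charpoly.rootMultiplicity (α₁ / 2) = 2 ∧
    (Module.finrank ℝ (LinearMap.ker (Matrix.toLin' (A - (α₁ / 2) • 1))) = 2 ↔
      (c = e ∧ b = f ∧ d - a + e - f = 0)) := by
  set μ := α₁ / 2 with hμ
  have htr : A.trace = a + d + (υ - e - f) := by
    rw [hA, Matrix.trace_fin_three]; simp
  have hα₁' : α₁ = a + d - e - f := by rw [hα₁, htr]; ring
  have hdet : A.det = υ * μ ^ 2 := by
    have h3 : A.det = υ * α₀ := by
      rw [hα₀]; field_simp
    rw [h3, hμ]; linear_combination (υ/4) * h2.symm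
  have hdet' : a*(d*(υ-e-f) - (υ-c-d)*f) - b*(c*(υ-e-f) - (υ-c-d)*e)
      + (υ-a-b)*(c*f - d*e) = υ * μ ^ 2 := by
    rw [← hdet, hA, Matrix.det_fin_three]; simp; ring
  have ht : a + d + (υ - e - f) = υ + 2*μ := by rw [hμ, hα₁']; ring
  have hs : (a*d - b*c) + (a*(υ-e-f) - (υ-a-b)*e) + (d*(υ-e-f) - (υ-c-d)*f)
      = 2*υ*μ + μ^2 := by
    apply mul_left_cancel₀ hυ
    have : υ * ((a*d - b*c) + (a*(υ-e-f) - (υ-a-b)*e) + (d*(υ-e-f) - (υ-c-d)*f))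
        = υ^2 * (a + d - e - f) + (a*(d*(υ-e-f) - (υ-c-d)*f) - b*(c*(υ-e-f) - (υ-c-d)*e)
          + (υ-a-b)*(c*f - d*e)) := by ring
    rw [this, hdet', ← hα₁', hμ]; ring
  have key : A.charpoly = (X - C υ) * (X - C μ) ^ 2 := by
    have hCt := congrArg (C : ℝ →+* ℝ[X]) ht
    have hCs := congrArg (C : ℝ →+* ℝ[X]) hs
    have hCd := congrArg (C : ℝ →+* ℝ[X]) hdet'
    simp only [map_add, map_sub, _root_.map_mul, map_pow, map_ofNat] at hCt hCs hCd
    rw [hA, Matrix.charpoly, Matrix.det_fin_three]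
    simp [charmatrix_apply, Matrix.one_apply, Fin.ext_iff]
    linear_combination (-X^2) * hCt + X * hCs - hCd
  have hμυ : μ ≠ υ := by
    intro h; apply h1; rw [← h, hμ]; ring
  constructor
  · rw [key, Polynomial.rootMultiplicity_mul
      (mul_ne_zero (Polynomial.X_sub_C_ne_zero υ) (pow_ne_zero 2 (Polynomial.X_sub_C_ne_zero μ))),
      Polynomial.rootMultiplicity_X_sub_C_pow,
      Polynomial.rootMultiplicity_eq_zero]
    intro h
    simp only [Polynomial.IsRoot, Polynomial.eval_sub, Polynomial.eval_X,
      Polynomial.eval_C, sub_eq_zero] at h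
    exact hμυ h
  · -- geometric multiplicity part
    set B := A - μ • (1 : Matrix (Fin 3) (Fin 3) ℝ) with hB
    set L := Matrix.toLin' B with hL
    have hrn : Module.finrank ℝ (LinearMap.range L) + Module.finrank ℝ (LinearMap.ker L) = 3 := by
      rw [LinearMap.finrank_range_add_finrank_ker, Module.finrank_fin_fun]
    have hone : (![1,1,1] : Fin 3 → ℝ) ≠ 0 := by
      intro h; have := congrFun h 0; simp at this
    have hu : L ![1,1,1] = (υ - μ) • ![1,1,1] := by
      rw [hL, Matrix.toLin'_apply, hB, hA]
      funext i
      fin_cases i <;>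
        simp [Matrix.mulVec, Matrix.sub_apply, Matrix.smul_apply, Matrix.one_apply,
          Fin.sum_univ_three, dotProduct] <;> ring
    have huz : (υ - μ) • (![1,1,1] : Fin 3 → ℝ) ≠ 0 :=
      smul_ne_zero (sub_ne_zero.2 (Ne.symm hμυ)) hone
    have hspan : Submodule.span ℝ {(υ - μ) • (![1,1,1] : Fin 3 → ℝ)} ≤ LinearMap.range L := by
      rw [Submodule.span_singleton_le_iff_mem]
      exact ⟨![1,1,1], hu⟩
    constructor
    · intro hker
      have hrange : Module.finrank ℝ (LinearMap.range L) = 1 := by omega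
      have heq : Submodule.span ℝ {(υ - μ) • (![1,1,1] : Fin 3 → ℝ)} = LinearMap.range L :=
        Submodule.eq_of_le_of_finrank_le hspan
          (by rw [hrange, finrank_span_singleton huz])
      have hcol : ∀ j : Fin 3, ∃ k : ℝ, k • ((υ - μ) • (![1,1,1] : Fin 3 → ℝ)) = L (Pi.single j 1) := by
        intro j
        rw [← Submodule.mem_span_singleton, heq]
        exact ⟨Pi.single j 1, rfl⟩
      obtain ⟨k0, hk0⟩ := hcol 0
      obtain ⟨k1, hk1⟩ := hcol 1
      have hc0 : L (Pi.single (0:Fin 3) 1) = ![a - μ, c, e] := by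
        rw [hL, Matrix.toLin'_apply, hB, hA]
        funext i
        fin_cases i <;>
          simp [Matrix.mulVec, Matrix.sub_apply, Matrix.smul_apply, Matrix.one_apply,
            Fin.sum_univ_three, dotProduct, Pi.single_apply]
      have hc1 : L (Pi.single (1:Fin 3) 1) = ![b, d - μ, f] := by
        rw [hL, Matrix.toLin'_apply, hB, hA]
        funext i
        fin_cases i <;>
          simp [Matrix.mulVec, Matrix.sub_apply, Matrix.smul_apply, Matrix.one_apply,
            Fin.sum_univ_three, dotProduct, Pi.single_apply]
      rw [hc0] at hk0; rw [hc1] at hk1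
      have e00 := congrFun hk0 0
      have e01 := congrFun hk0 1
      have e02 := congrFun hk0 2
      have e10 := congrFun hk1 0
      have e11 := congrFun hk1 1
      have e12 := congrFun hk1 2
      simp [Pi.smul_apply] at e00 e01 e02 e10 e11 e12
      refine ⟨by linarith, by linarith, by linarith⟩
    · rintro ⟨hce, hbf, hdaef⟩
      subst hce; subst hbf
      have hμval : μ = a - c := by rw [hμ, hα₁']; linarith
      have hBM : B = !![c, b, υ - a - b; c, b, υ - a - b; c, b, υ - a - b] := by
        rw [hB, hA]
        ext i j
        fin_cases i <;> fin_cases j <;>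
          simp [Matrix.one_apply, hμval, Matrix.vecHead, Matrix.vecTail] <;> linarith [hdaef]
      have hrowB : ∀ x : Fin 3 → ℝ,
          L x = (c * x 0 + b * x 1 + (υ - a - b) * x 2) • ![1,1,1] := by
        intro x
        rw [hL, Matrix.toLin'_apply, hBM]
        funext i
        fin_cases i <;>
          simp [Matrix.mulVec, dotProduct, Fin.sum_univ_three, Matrix.vecHead, Matrix.vecTail]
      have hle : LinearMap.range L ≤ Submodule.span ℝ {(![1,1,1] : Fin 3 → ℝ)} := by
        rintro y ⟨x, rfl⟩
        exact Submodule.mem_span_singleton.2 ⟨_, (hrowB x).symm⟩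
      have h1r : Module.finrank ℝ (LinearMap.range L) ≤ 1 := by
        calc Module.finrank ℝ (LinearMap.range L)
            ≤ Module.finrank ℝ (Submodule.span ℝ {(![1,1,1] : Fin 3 → ℝ)}) :=
              Submodule.finrank_mono hle
          _ = 1 := finrank_span_singleton hone
      have h2r : 1 ≤ Module.finrank ℝ (LinearMap.range L) := by
        calc 1 = Module.finrank ℝ (Submodule.span ℝ {(υ - μ) • (![1,1,1] : Fin 3 → ℝ)}) :=
              (finrank_span_singleton huz).symm
          _ ≤ Module.finrank ℝ (LinearMap.range L) := Submodule.finrank_mono hspan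
      omega
end

section
/- Let h₁, …, h_m : ℝ^{m+1} → ℝ with h_i(x,λ) = μ x_i λ + q_i(x) where μ ≠ 0 and q_i homogeneous quadratic. If h_i and h_j (i ≠ j) share a nonconstant common factor, then that common factor must be linear, of the form μλ + Σ_l c_l x_l, and h_i = x_i(μλ + Σ_l c_l x_l), h_j = x_j(μλ + Σ_l c_l x_l). -/
open MvPolynomial

section AuxLemmas
open Finset

-- component collapse helper
lemma comp_mul_collapse {σ R : Type*} [CommRing R] (f g : MvPolynomial σ R) (a b : ℕ)
    (hf : ∀ s, s ≠ a → homogeneousComponent s f = 0 ∨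
      ∀ u, s + u = a + b → homogeneousComponent u g = 0) :
    homogeneousComponent (a + b) (f * g) =
      homogeneousComponent a f * homogeneousComponent b g := by
  conv_lhs => rw [← sum_homogeneousComponent f, ← sum_homogeneousComponent g,
    Finset.sum_mul_sum]
  rw [map_sum]
  have key : ∀ s u : ℕ, homogeneousComponent (a + b)
      (homogeneousComponent s f * homogeneousComponent u g)
      = if a + b = s + u then homogeneousComponent s f * homogeneousComponent u g else 0 := by
    intro s u
    exact homogeneousComponent_of_mem (by
      rw [mem_homogeneousSubmodule]
      exact (homogeneousComponent_isHomogeneous s f).mul (homogeneousComponent_isHomogeneous u g))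
  calc (∑ s ∈ range (f.totalDegree + 1), homogeneousComponent (a+b)
            (∑ u ∈ range (g.totalDegree + 1), homogeneousComponent s f * homogeneousComponent u g))
      = ∑ s ∈ range (f.totalDegree + 1), ∑ u ∈ range (g.totalDegree + 1),
          (if a + b = s + u then homogeneousComponent s f * homogeneousComponent u g else 0) := by
        refine Finset.sum_congr rfl fun s _ => ?_
        rw [map_sum]
        exact Finset.sum_congr rfl fun u _ => key s u
    _ = homogeneousComponent a f * homogeneousComponent b g := by
        by_cases hs : a ∈ range (f.totalDegree + 1)
        · rw [Finset.sum_eq_single_of_mem a hs]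
          · by_cases hu : b ∈ range (g.totalDegree + 1)
            · rw [Finset.sum_eq_single_of_mem b hu]
              · rw [if_pos rfl]
              · intro u _ hub
                rw [if_neg (by omega)]
            · have hb0 : homogeneousComponent b g = 0 :=
                homogeneousComponent_eq_zero _ g (by simp at hu; omega)
              rw [hb0, mul_zero]
              refine Finset.sum_eq_zero fun u hu' => ?_
              simp only [mem_range] at hu hu'
              rw [if_neg (by omega)]
          · intro s _ hsa
            refine Finset.sum_eq_zero fun u _ => ?_
            rcases hf s hsa with h0 | h0
            · split <;> simp [h0]
            · split_ifs with hcond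
              · rw [h0 u hcond.symm, mul_zero]
              · rfl
        · have ha0 : homogeneousComponent a f = 0 :=
            homogeneousComponent_eq_zero _ f (by simp at hs; omega)
          rw [ha0, zero_mul]
          refine Finset.sum_eq_zero fun s hs' => ?_
          · simp only [mem_range] at hs hs'
            refine Finset.sum_eq_zero fun u _ => ?_
            rcases hf s (by omega) with h0 | h0
            · split <;> simp [h0]
            · split_ifs with hcond
              · rw [h0 u hcond.symm, mul_zero]
              · rfl

lemma comp_ne_zero_top {σ R : Type*} [CommRing R] {f : MvPolynomial σ R} (hf : f ≠ 0) :
    homogeneousComponent f.totalDegree f ≠ 0 := by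
  have hne : f.support.Nonempty := support_nonempty.mpr hf
  obtain ⟨d, hd, hdeg⟩ := Finset.exists_mem_eq_sup f.support hne Finsupp.degree
  have : coeff d (homogeneousComponent f.totalDegree f) = coeff d f := by
    rw [coeff_homogeneousComponent, if_pos]
    show d.degree = f.support.sup Finsupp.degree
    omega
  intro h0
  rw [h0, coeff_zero] at this
  exact (mem_support_iff.mp hd) this.symm

lemma comp_ne_zero_bot {σ R : Type*} [CommRing R] {f : MvPolynomial σ R} (hf : f ≠ 0)
    (hne : f.support.Nonempty) :
    homogeneousComponent (f.support.inf' hne Finsupp.degree) f ≠ 0 := by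
  obtain ⟨d, hd, hdeg⟩ := Finset.exists_mem_eq_inf' hne Finsupp.degree
  have : coeff d (homogeneousComponent (f.support.inf' hne Finsupp.degree) f) = coeff d f := by
    rw [coeff_homogeneousComponent, if_pos hdeg.symm]
  intro h0
  rw [h0, coeff_zero] at this
  exact (mem_support_iff.mp hd) this.symm

lemma homog_of_mul {σ R : Type*} [CommRing R] [IsDomain R] {f g : MvPolynomial σ R} {n : ℕ}
    (h : (f * g).IsHomogeneous n) (hf0 : f ≠ 0) (hg0 : g ≠ 0) :
    f.IsHomogeneous f.totalDegree ∧ g.IsHomogeneous g.totalDegree ∧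
      f.totalDegree + g.totalDegree = n := by
  have hfg0 : f * g ≠ 0 := mul_ne_zero hf0 hg0
  have hfne : f.support.Nonempty := support_nonempty.mpr hf0
  have hgne : g.support.Nonempty := support_nonempty.mpr hg0
  set Mf := f.totalDegree with hMf
  set Mg := g.totalDegree with hMg
  set mf := f.support.inf' hfne Finsupp.degree with hmf
  set mg := g.support.inf' hgne Finsupp.degree with hmg
  have hmMf : mf ≤ Mf := by
    obtain ⟨d, hd, hdeg⟩ := Finset.exists_mem_eq_sup f.support hfne Finsupp.degree
    calc mf ≤ d.degree := Finset.inf'_le _ hd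
    _ = Mf := hdeg.symm
  have hmMg : mg ≤ Mg := by
    obtain ⟨d, hd, hdeg⟩ := Finset.exists_mem_eq_sup g.support hgne Finsupp.degree
    calc mg ≤ d.degree := Finset.inf'_le _ hd
    _ = Mg := hdeg.symm
  have hflow : ∀ s, s < mf → homogeneousComponent s f = 0 := fun s hs =>
    homogeneousComponent_eq_zero' _ _ fun d hd => by
      have := Finset.inf'_le Finsupp.degree hd; omega
  have hglow : ∀ s, s < mg → homogeneousComponent s g = 0 := fun s hs =>
    homogeneousComponent_eq_zero' _ _ fun d hd => by
      have := Finset.inf'_le Finsupp.degree hd; omega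
  have hfhigh : ∀ s, Mf < s → homogeneousComponent s f = 0 := fun s hs =>
    homogeneousComponent_eq_zero _ _ hs
  have hghigh : ∀ s, Mg < s → homogeneousComponent s g = 0 := fun s hs =>
    homogeneousComponent_eq_zero _ _ hs
  -- top
  have htop : homogeneousComponent (Mf + Mg) (f * g) =
      homogeneousComponent Mf f * homogeneousComponent Mg g := by
    refine comp_mul_collapse f g Mf Mg fun s hs => ?_
    rcases lt_or_gt_of_ne hs with hlt | hgt
    · right; intro u hu; exact hghigh u (by omega)
    · left; exact hfhigh s hgt
  have hbot : homogeneousComponent (mf + mg) (f * g) =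
      homogeneousComponent mf f * homogeneousComponent mg g := by
    refine comp_mul_collapse f g mf mg fun s hs => ?_
    rcases lt_or_gt_of_ne hs with hlt | hgt
    · left; exact hflow s hlt
    · right; intro u hu; exact hglow u (by omega)
  have htopne : homogeneousComponent (Mf + Mg) (f * g) ≠ 0 := by
    rw [htop]; exact mul_ne_zero (comp_ne_zero_top hf0) (comp_ne_zero_top hg0)
  have hbotne : homogeneousComponent (mf + mg) (f * g) ≠ 0 := by
    rw [hbot]; exact mul_ne_zero (comp_ne_zero_bot hf0 hfne) (comp_ne_zero_bot hg0 hgne)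
  have hMn : Mf + Mg = n := by
    by_contra hne
    exact htopne (by rw [homogeneousComponent_of_mem ((mem_homogeneousSubmodule _ _).mpr h),
      if_neg hne])
  have hmn : mf + mg = n := by
    by_contra hne
    exact hbotne (by rw [homogeneousComponent_of_mem ((mem_homogeneousSubmodule _ _).mpr h),
      if_neg hne])
  have hfM : mf = Mf := by omega
  have hgM : mg = Mg := by omega
  refine ⟨?_, ?_, hMn⟩
  · intro d hd
    have h1 : d.degree ≤ Mf := le_totalDegree (mem_support_iff.mpr hd)
    have h2 : mf ≤ d.degree := Finset.inf'_le _ (mem_support_iff.mpr hd)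
    have : d.degree = Mf := by omega
    exact (congrFun (congrArg DFunLike.coe (Finsupp.degree_eq_weight_one (R := ℕ) (σ := σ))) d).symm.trans this
  · intro d hd
    have h1 : d.degree ≤ Mg := le_totalDegree (mem_support_iff.mpr hd)
    have h2 : mg ≤ d.degree := Finset.inf'_le _ (mem_support_iff.mpr hd)
    have : d.degree = Mg := by omega
    exact (congrFun (congrArg DFunLike.coe (Finsupp.degree_eq_weight_one (R := ℕ) (σ := σ))) d).symm.trans this

lemma eq_C_of_homog0 {σ : Type*} {R : Type*} [CommSemiring R] {t : MvPolynomial σ R}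
    (h : t.IsHomogeneous 0) : t = C (coeff 0 t) := by
  classical
  ext d
  rcases eq_or_ne d 0 with rfl | hd
  · simp
  · rw [coeff_C, if_neg (fun h' => hd h'.symm)]
    exact h.coeff_eq_zero (by rwa [ne_eq, Finsupp.degree_eq_zero_iff])

lemma degree_one_single {σ : Type*} {d : σ →₀ ℕ} (h : d.degree = 1) :
    ∃ v, d = Finsupp.single v 1 := by
  classical
  have hne : d.support.Nonempty := by
    rw [Finsupp.support_nonempty_iff]
    intro h0; rw [h0] at h; simp at h
  obtain ⟨v, hv⟩ := hne
  refine ⟨v, ?_⟩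
  have hdv : 1 ≤ d v := Nat.one_le_iff_ne_zero.mpr (Finsupp.mem_support_iff.mp hv)
  have hsum : ∑ a ∈ d.support, d a = 1 := h
  have hdv1 : d v = 1 := by
    have h3 : d v ≤ ∑ a ∈ d.support, d a := by
      simpa using Finset.single_le_sum (fun a (_ : a ∈ d.support) => Nat.zero_le (d a)) hv
    omega
  ext u
  rcases eq_or_ne u v with rfl | huv
  · simp [hdv1]
  · rw [Finsupp.single_apply, if_neg (fun h' => huv h'.symm)]
    by_contra hdu
    have hu : u ∈ d.support := Finsupp.mem_support_iff.mpr hdu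
    have hsub : {v, u} ⊆ d.support := by
      intro x hx; simp at hx; rcases hx with rfl | rfl <;> assumption
    have h2 : d v + d u ≤ ∑ a ∈ d.support, d a := by
      calc d v + d u = ∑ a ∈ ({v, u} : Finset σ), d a := by
            rw [Finset.sum_pair (fun h' => huv h'.symm)]
      _ ≤ _ := Finset.sum_le_sum_of_subset hsub
    omega

lemma linear_decomp {σ : Type*} [Fintype σ] {R : Type*} [CommSemiring R]
    {t : MvPolynomial σ R} (ht : t.IsHomogeneous 1) :
    t = ∑ v, C (coeff (Finsupp.single v 1) t) * X v := by
  classical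
  ext d
  rw [coeff_sum]
  simp only [coeff_C_mul, coeff_X', mul_ite, mul_one, mul_zero]
  by_cases hd : ∃ v, Finsupp.single v 1 = d
  · obtain ⟨v, rfl⟩ := hd
    rw [Finset.sum_eq_single v]
    · rw [if_pos rfl]
    · intro u _ huv
      rw [if_neg]
      intro he
      rcases (Finsupp.single_eq_single_iff _ _ _ _).mp he with ⟨h1, -⟩ | ⟨h1, -⟩
      · exact huv h1
      · exact one_ne_zero h1
    · intro hv; exact absurd (Finset.mem_univ v) hv
  · push_neg at hd
    rw [Finset.sum_eq_zero (fun v _ => if_neg (hd v))]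
    by_contra hc
    obtain ⟨v, hv⟩ := degree_one_single
      (by rw [Finsupp.degree_eq_weight_one]; exact ht (fun h' => hc (by rw [h'])))
    exact hd v hv.symm

noncomputable def phiEquiv (m : ℕ) : MvPolynomial (Fin m ⊕ Unit) ℝ ≃ₐ[ℝ]
    Polynomial (MvPolynomial (Fin m) ℝ) :=
  (renameEquiv ℝ (Equiv.optionEquivSumPUnit (Fin m)).symm).trans (optionEquivLeft ℝ (Fin m))

lemma phiEquiv_X_inl (m : ℕ) (l : Fin m) :
    phiEquiv m (X (Sum.inl l)) = Polynomial.C (X l) := by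
  simp [phiEquiv, optionEquivLeft_X_some]

lemma phiEquiv_X_inr (m : ℕ) :
    phiEquiv m (X (Sum.inr ())) = Polynomial.X := by
  simp [phiEquiv, optionEquivLeft_X_none]

lemma phiEquiv_C (m : ℕ) (r : ℝ) :
    phiEquiv m (C r) = Polynomial.C (C r) := by
  simp [phiEquiv, optionEquivLeft_C]

lemma phiEquiv_rename (m : ℕ) (f : MvPolynomial (Fin m) ℝ) :
    phiEquiv m (rename Sum.inl f) = Polynomial.C f := by
  have : ((phiEquiv m : MvPolynomial (Fin m ⊕ Unit) ℝ →+* Polynomial (MvPolynomial (Fin m) ℝ)).comp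
      (rename (Sum.inl : Fin m → Fin m ⊕ Unit)).toRingHom) =
      (Polynomial.C.comp (RingHom.id (MvPolynomial (Fin m) ℝ))) := by
    apply MvPolynomial.ringHom_ext
    · intro r
      simp [phiEquiv_C m r]
    · intro l
      simp [phiEquiv_X_inl m l]
  exact RingHom.congr_fun this f

lemma exists_rename_of_no_lambda {m : ℕ} (f : MvPolynomial (Fin m ⊕ Unit) ℝ)
    (hf : ∀ d ∈ f.support, d (Sum.inr ()) = 0) :
    ∃ Q : MvPolynomial (Fin m) ℝ, rename Sum.inl Q = f := by
  apply exists_rename_eq_of_vars_subset_range f Sum.inl Sum.inl_injective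
  intro v hv
  obtain ⟨d, hd, hvd⟩ := (mem_vars v).mp hv
  match v with
  | Sum.inl l => exact ⟨l, rfl⟩
  | Sum.inr () =>
    exact absurd (hf d hd) (Finsupp.mem_support_iff.mp hvd)

lemma phiEquiv_coeff_homog {m n : ℕ} (k j : ℕ) {f : MvPolynomial (Fin m ⊕ Unit) ℝ}
    (hf : f.IsHomogeneous n) (hkj : k + j = n) :
    (((phiEquiv m) f).coeff k).IsHomogeneous j := by
  refine IsHomogeneous.coeff_isHomogeneous_of_optionEquivLeft_symm ?_ k j hkj
  have : (optionEquivLeft ℝ (Fin m)).symm (phiEquiv m f) =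
      renameEquiv ℝ (Equiv.optionEquivSumPUnit (Fin m)).symm f := by
    rw [phiEquiv, AlgEquiv.trans_apply, AlgEquiv.symm_apply_apply]
  rw [this]
  exact hf.rename_isHomogeneous

lemma phiEquiv_C_mul_X_inl (m : ℕ) (r : ℝ) (l : Fin m) :
    phiEquiv m (C r * X (Sum.inl l)) = Polynomial.C (C r * X l) := by
  conv_lhs => rw [map_mul]
  rw [phiEquiv_C, phiEquiv_X_inl, ← Polynomial.C_mul]

end AuxLemmas

/-- if `h i = μ x_i λ + q i` and `h j = μ x_j λ + q j` (`i ≠ j`, `μ ≠ 0`,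
`q`'s homogeneous quadratics in the `x` variables) share a nonconstant common factor,
then that factor is linear of the form `μλ + Σ c_l x_l` (up to a unit), and
`h i = x_i (μλ + Σ c_l x_l)`, `h j = x_j (μλ + Σ c_l x_l)`. -/
theorem stmt_8 (m : ℕ) (μ : ℝ) (hμ : μ ≠ 0)
    (q : Fin m → MvPolynomial (Fin m ⊕ Unit) ℝ)
    (hq2 : ∀ i, (q i).IsHomogeneous 2)
    (hqx : ∀ i, ∀ d ∈ (q i).support, d (Sum.inr ()) = 0)
    (h : Fin m → MvPolynomial (Fin m ⊕ Unit) ℝ)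
    (hdef : ∀ i, h i = C μ * X (Sum.inl i) * X (Sum.inr ()) + q i)
    (i j : Fin m) (hij : i ≠ j)
    (p : MvPolynomial (Fin m ⊕ Unit) ℝ) (hp : 0 < p.totalDegree)
    (hpi : p ∣ h i) (hpj : p ∣ h j) :
    ∃ c : Fin m → ℝ,
      (∃ u : ℝˣ, p = C (u : ℝ) *
        (C μ * X (Sum.inr ()) + ∑ l, C (c l) * X (Sum.inl l))) ∧
      h i = X (Sum.inl i) * (C μ * X (Sum.inr ()) + ∑ l, C (c l) * X (Sum.inl l)) ∧
      h j = X (Sum.inl j) * (C μ * X (Sum.inr ()) + ∑ l, C (c l) * X (Sum.inl l)) := by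
  classical
  have hd0 : ∀ (k : Fin m), (C μ * X (Sum.inl k) * X (Sum.inr ()) : MvPolynomial (Fin m ⊕ Unit) ℝ)
      = monomial (Finsupp.single (Sum.inl k) 1 + Finsupp.single (Sum.inr ()) 1) μ := by
    intro k
    rw [C_apply, X, X, monomial_mul, monomial_mul]
    simp
  have hdeg2 : ∀ (k : Fin m), (Finsupp.single (Sum.inl k : Fin m ⊕ Unit) 1
      + Finsupp.single (Sum.inr ()) 1).degree = 2 := by
    intro k
    rw [Finsupp.degree_eq_weight_one, map_add]
    simp [Finsupp.weight_apply, Finsupp.sum_single_index]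
  have hhom : ∀ k, (h k).IsHomogeneous 2 := by
    intro k
    rw [hdef k, hd0 k]
    exact (isHomogeneous_monomial μ (hdeg2 k)).add (hq2 k)
  have hqcoeff : ∀ k (d : (Fin m ⊕ Unit) →₀ ℕ), d (Sum.inr ()) ≠ 0 → coeff d (q k) = 0 := by
    intro k d hd
    by_contra hc
    exact hd (hqx k d (mem_support_iff.mpr hc))
  have hcoeff : ∀ k k' : Fin m,
      coeff (Finsupp.single (Sum.inl k') 1 + Finsupp.single (Sum.inr ()) 1) (h k)
        = if k = k' then μ else 0 := by
    intro k k'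
    rw [hdef k, coeff_add, hd0 k, coeff_monomial,
      hqcoeff k _ (by simp), add_zero]
    by_cases hkk : k = k'
    · subst hkk; rw [if_pos rfl, if_pos rfl]
    · rw [if_neg, if_neg hkk]
      intro he
      have := DFunLike.congr_fun he (Sum.inl k)
      simp [Finsupp.single_apply, hkk, Ne.symm hkk] at this
  have hne : ∀ k, h k ≠ 0 := by
    intro k h0
    have := hcoeff k k
    rw [h0, coeff_zero, if_pos rfl] at this
    exact hμ this.symm
  have hp0 : p ≠ 0 := by
    intro h0
    rw [h0, totalDegree_zero] at hp
    exact lt_irrefl 0 hp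
  obtain ⟨wi, hwi⟩ := hpi
  obtain ⟨wj, hwj⟩ := hpj
  have hwi0 : wi ≠ 0 := by
    intro h0; exact hne i (by rw [hwi, h0, mul_zero])
  have hwj0 : wj ≠ 0 := by
    intro h0; exact hne j (by rw [hwj, h0, mul_zero])
  obtain ⟨hpHom, hwiHom, hsum_i⟩ := homog_of_mul (hwi ▸ hhom i) hp0 hwi0
  obtain ⟨-, hwjHom, hsum_j⟩ := homog_of_mul (hwj ▸ hhom j) hp0 hwj0
  rcases (show p.totalDegree = 1 ∨ p.totalDegree = 2 by omega) with ha | ha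
  · -- linear factor case
    have hp1 : p.IsHomogeneous 1 := by rwa [ha] at hpHom
    have hwi1 : wi.IsHomogeneous 1 := by
      have : wi.totalDegree = 1 := by omega
      rwa [this] at hwiHom
    have hwj1 : wj.IsHomogeneous 1 := by
      have : wj.totalDegree = 1 := by omega
      rwa [this] at hwjHom
    obtain ⟨Qi, hQi⟩ := exists_rename_of_no_lambda (q i) (hqx i)
    obtain ⟨Qj, hQj⟩ := exists_rename_of_no_lambda (q j) (hqx j)
    set φ := phiEquiv m with hφdef
    have Hi : φ (h i) = Polynomial.C (C μ * X i) * Polynomial.X + Polynomial.C Qi := by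
      rw [hdef i, map_add, map_mul, map_mul, phiEquiv_C, phiEquiv_X_inl, phiEquiv_X_inr,
        ← hQi, phiEquiv_rename, ← Polynomial.C_mul]
    have Hj : φ (h j) = Polynomial.C (C μ * X j) * Polynomial.X + Polynomial.C Qj := by
      rw [hdef j, map_add, map_mul, map_mul, phiEquiv_C, phiEquiv_X_inl, phiEquiv_X_inr,
        ← hQj, phiEquiv_rename, ← Polynomial.C_mul]
    have hCX_ne : ∀ k : Fin m, (C μ * X k : MvPolynomial (Fin m) ℝ) ≠ 0 := by
      intro k h0
      rcases mul_eq_zero.mp h0 with hc | hx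
      · exact hμ (by simpa using congrArg (coeff 0) hc)
      · exact X_ne_zero k hx
    have hHine : φ (h i) ≠ 0 := fun h0 => hne i (φ.injective (by rw [h0, map_zero]))
    have hHjne : φ (h j) ≠ 0 := fun h0 => hne j (φ.injective (by rw [h0, map_zero]))
    have hHideg : (φ (h i)).natDegree = 1 := by
      rw [Hi]; exact Polynomial.natDegree_linear (hCX_ne i)
    have hHjdeg : (φ (h j)).natDegree = 1 := by
      rw [Hj]; exact Polynomial.natDegree_linear (hCX_ne j)
    have HiPW : φ (h i) = φ p * φ wi := by rw [hwi, map_mul]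
    have HjPW : φ (h j) = φ p * φ wj := by rw [hwj, map_mul]
    have hPdeg : (φ p).natDegree ≤ 1 := by
      rw [← hHideg]
      exact Polynomial.natDegree_le_of_dvd (Dvd.intro _ HiPW.symm) hHine
    have hWideg : (φ wi).natDegree ≤ 1 := by
      rw [← hHideg]
      exact Polynomial.natDegree_le_of_dvd (Dvd.intro_left _ HiPW.symm) hHine
    have hWjdeg : (φ wj).natDegree ≤ 1 := by
      rw [← hHjdeg]
      exact Polynomial.natDegree_le_of_dvd (Dvd.intro_left _ HjPW.symm) hHjne
    set A := (φ p).coeff 1 with hA_def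
    set B := (φ p).coeff 0 with hB_def
    set Ei := (φ wi).coeff 1 with hEi_def
    set Di := (φ wi).coeff 0 with hDi_def
    set Ej := (φ wj).coeff 1 with hEj_def
    set Dj := (φ wj).coeff 0 with hDj_def
    have hPeq : φ p = Polynomial.C A * Polynomial.X + Polynomial.C B :=
      Polynomial.eq_X_add_C_of_natDegree_le_one hPdeg
    have hWieq : φ wi = Polynomial.C Ei * Polynomial.X + Polynomial.C Di :=
      Polynomial.eq_X_add_C_of_natDegree_le_one hWideg
    have hWjeq : φ wj = Polynomial.C Ej * Polynomial.X + Polynomial.C Dj :=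
      Polynomial.eq_X_add_C_of_natDegree_le_one hWjdeg
    have expand : ∀ (a b e d : MvPolynomial (Fin m) ℝ),
        (Polynomial.C a * Polynomial.X + Polynomial.C b) *
          (Polynomial.C e * Polynomial.X + Polynomial.C d)
        = Polynomial.C (a*e) * Polynomial.X^2 + Polynomial.C (a*d + b*e) * Polynomial.X
            + Polynomial.C (b*d) := by
      intros a b e d
      simp only [map_mul, map_add]
      ring
    have keyi : Polynomial.C (C μ * X i) * Polynomial.X + Polynomial.C Qi
        = Polynomial.C (A*Ei) * Polynomial.X^2 + Polynomial.C (A*Di + B*Ei) * Polynomial.X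
            + Polynomial.C (B*Di) := by
      rw [← Hi, HiPW, hPeq, hWieq, expand]
    have keyj : Polynomial.C (C μ * X j) * Polynomial.X + Polynomial.C Qj
        = Polynomial.C (A*Ej) * Polynomial.X^2 + Polynomial.C (A*Dj + B*Ej) * Polynomial.X
            + Polynomial.C (B*Dj) := by
      rw [← Hj, HjPW, hPeq, hWjeq, expand]
    have e2i : A = 0 ∨ Ei = 0 := by
      have hc := Polynomial.ext_iff.mp keyi 2
      simp only [Polynomial.coeff_add, Polynomial.coeff_C_mul, Polynomial.coeff_X_pow,
        Polynomial.coeff_X, Polynomial.coeff_C] at hc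
      norm_num at hc
      exact hc
    have e2j : A = 0 ∨ Ej = 0 := by
      have hc := Polynomial.ext_iff.mp keyj 2
      simp only [Polynomial.coeff_add, Polynomial.coeff_C_mul, Polynomial.coeff_X_pow,
        Polynomial.coeff_X, Polynomial.coeff_C] at hc
      norm_num at hc
      exact hc
    have e1i : C μ * X i = A * Di + B * Ei := by
      have hc := Polynomial.ext_iff.mp keyi 1
      simp only [Polynomial.coeff_add, Polynomial.coeff_C_mul, Polynomial.coeff_X_pow,
        Polynomial.coeff_X, Polynomial.coeff_C] at hc
      norm_num at hc
      exact hc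
    have e1j : C μ * X j = A * Dj + B * Ej := by
      have hc := Polynomial.ext_iff.mp keyj 1
      simp only [Polynomial.coeff_add, Polynomial.coeff_C_mul, Polynomial.coeff_X_pow,
        Polynomial.coeff_X, Polynomial.coeff_C] at hc
      norm_num at hc
      exact hc
    have hA0 : A.IsHomogeneous 0 := phiEquiv_coeff_homog 1 0 hp1 rfl
    have hB1 : B.IsHomogeneous 1 := phiEquiv_coeff_homog 0 1 hp1 rfl
    have hEi0 : Ei.IsHomogeneous 0 := phiEquiv_coeff_homog 1 0 hwi1 rfl
    have hEj0 : Ej.IsHomogeneous 0 := phiEquiv_coeff_homog 1 0 hwj1 rfl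
    by_cases hA : A = 0
    · exfalso
      rw [hA, zero_mul, zero_add] at e1i e1j
      obtain ⟨ei, hEiC⟩ : ∃ c, Ei = C c := ⟨_, eq_C_of_homog0 hEi0⟩
      obtain ⟨ej, hEjC⟩ : ∃ c, Ej = C c := ⟨_, eq_C_of_homog0 hEj0⟩
      rw [hEiC] at e1i
      rw [hEjC] at e1j
      have hei : ei ≠ 0 := by
        intro h0; rw [h0, C_0, mul_zero] at e1i; exact hCX_ne i e1i
      have hej : ej ≠ 0 := by
        intro h0; rw [h0, C_0, mul_zero] at e1j; exact hCX_ne j e1j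
      have hCei : (C ei : MvPolynomial (Fin m) ℝ) ≠ 0 := by
        intro h0; exact hei (by simpa using congrArg (coeff 0) h0)
      have hCej : (C ej : MvPolynomial (Fin m) ℝ) ≠ 0 := by
        intro h0; exact hej (by simpa using congrArg (coeff 0) h0)
      have hBi : B = C (ei⁻¹ * μ) * X i := by
        apply mul_right_cancel₀ hCei
        rw [← e1i, mul_right_comm, ← C_mul]
        congr 2
        field_simp
      have hBj : B = C (ej⁻¹ * μ) * X j := by
        apply mul_right_cancel₀ hCej
        rw [← e1j, mul_right_comm, ← C_mul]
        congr 2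
        field_simp
      have hcontra := hBi.symm.trans hBj
      have := congrArg (coeff (Finsupp.single i 1)) hcontra
      rw [coeff_C_mul, coeff_C_mul, coeff_X', coeff_X', if_pos rfl,
        if_neg] at this
      · simp only [mul_one, mul_zero] at this
        exact hμ (by
          have h1 : ei⁻¹ ≠ 0 := inv_ne_zero hei
          field_simp at this
          simpa using this)
      · intro he
        rcases (Finsupp.single_eq_single_iff _ _ _ _).mp he with ⟨h1, -⟩ | ⟨h1, -⟩
        · exact hij h1.symm
        · exact one_ne_zero h1
    · -- A ≠ 0
      obtain ⟨α, hAC⟩ : ∃ c, A = C c := ⟨_, eq_C_of_homog0 hA0⟩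
      have hα : α ≠ 0 := by
        intro h0; rw [h0, C_0] at hAC; exact hA hAC
      have hCα : (C α : MvPolynomial (Fin m) ℝ) ≠ 0 := by
        intro h0; exact hα (by simpa using congrArg (coeff 0) h0)
      have hEi : Ei = 0 := by
        rcases e2i with h0 | h0
        · exact absurd h0 hA
        · exact h0
      have hEj : Ej = 0 := by
        rcases e2j with h0 | h0
        · exact absurd h0 hA
        · exact h0
      rw [hEi, mul_zero, add_zero, hAC] at e1i
      rw [hEj, mul_zero, add_zero, hAC] at e1j
      set τ : ℝ := α⁻¹ * μ with hτ
      have hτ0 : τ ≠ 0 := mul_ne_zero (inv_ne_zero hα) hμ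
      have hDi : Di = C τ * X i := by
        apply mul_left_cancel₀ hCα
        rw [← e1i, ← mul_assoc, ← C_mul]
        congr 2
        rw [hτ]
        field_simp
      have hDj : Dj = C τ * X j := by
        apply mul_left_cancel₀ hCα
        rw [← e1j, ← mul_assoc, ← C_mul]
        congr 2
        rw [hτ]
        field_simp
      -- reconstruct upstairs
      have hwiC : wi = C τ * X (Sum.inl i) := by
        apply φ.injective
        rw [phiEquiv_C_mul_X_inl, hWieq, hEi, hDi, map_zero, zero_mul, zero_add]
      have hwjC : wj = C τ * X (Sum.inl j) := by
        apply φ.injective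
        rw [phiEquiv_C_mul_X_inl, hWjeq, hEj, hDj, map_zero, zero_mul, zero_add]
      have hpC : p = C α * X (Sum.inr ()) + rename Sum.inl B := by
        apply φ.injective
        rw [hPeq, hAC, map_add, map_mul, phiEquiv_C, phiEquiv_X_inr, phiEquiv_rename]
      have hBdec : B = ∑ l, C (coeff (Finsupp.single l 1) B) * X l := linear_decomp hB1
      set b : Fin m → ℝ := fun l => coeff (Finsupp.single l 1) B with hb
      have hrenB : rename (Sum.inl : Fin m → Fin m ⊕ Unit) B
          = ∑ l, C (b l) * X (Sum.inl l) := by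
        conv_lhs => rw [hBdec]
        rw [map_sum]
        refine Finset.sum_congr rfl fun l _ => ?_
        rw [map_mul, rename_C, rename_X]
      refine ⟨fun l => τ * b l, ⟨Units.mk0 (α * μ⁻¹) (mul_ne_zero hα (inv_ne_zero hμ)), ?_⟩,
        ?_, ?_⟩
      · -- p
        have hSfact : (∑ l, C (τ * b l) * X (Sum.inl l) : MvPolynomial (Fin m ⊕ Unit) ℝ)
            = C τ * ∑ l, C (b l) * X (Sum.inl l) := by
          rw [Finset.mul_sum]
          exact Finset.sum_congr rfl fun l _ => by rw [← mul_assoc, ← C_mul]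
        have hu_mu : (C (α * μ⁻¹) * C μ : MvPolynomial (Fin m ⊕ Unit) ℝ) = C α := by
          rw [← C_mul]; congr 1; field_simp
        have hu_tau : (C (α * μ⁻¹) * C τ : MvPolynomial (Fin m ⊕ Unit) ℝ) = 1 := by
          rw [← C_mul, hτ, ← C_1]
          congr 1
          field_simp
        rw [hpC, hrenB, Units.val_mk0, hSfact, mul_add, ← mul_assoc, hu_mu, ← mul_assoc,
          hu_tau, one_mul]
      · -- h i
        have hSfact : (∑ l, C (τ * b l) * X (Sum.inl l) : MvPolynomial (Fin m ⊕ Unit) ℝ)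
            = C τ * ∑ l, C (b l) * X (Sum.inl l) := by
          rw [Finset.mul_sum]
          exact Finset.sum_congr rfl fun l _ => by rw [← mul_assoc, ← C_mul]
        have hμval : (C μ : MvPolynomial (Fin m ⊕ Unit) ℝ) = C α * C τ := by
          rw [← C_mul]; congr 1; rw [hτ]; field_simp
        rw [hwi, hpC, hwiC, hrenB, hSfact, hμval]
        ring
      · -- h j
        have hSfact : (∑ l, C (τ * b l) * X (Sum.inl l) : MvPolynomial (Fin m ⊕ Unit) ℝ)
            = C τ * ∑ l, C (b l) * X (Sum.inl l) := by
          rw [Finset.mul_sum]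
          exact Finset.sum_congr rfl fun l _ => by rw [← mul_assoc, ← C_mul]
        have hμval : (C μ : MvPolynomial (Fin m ⊕ Unit) ℝ) = C α * C τ := by
          rw [← C_mul]; congr 1; rw [hτ]; field_simp
        rw [hwj, hpC, hwjC, hrenB, hSfact, hμval]
        ring
  · -- quadratic factor case: contradiction
    exfalso
    have hwi0' : wi.IsHomogeneous 0 := by
      have : wi.totalDegree = 0 := by omega
      rwa [this] at hwiHom
    have hwj0' : wj.IsHomogeneous 0 := by
      have : wj.totalDegree = 0 := by omega
      rwa [this] at hwjHom
    obtain ⟨ci, hwiC⟩ : ∃ c, wi = C c := ⟨_, eq_C_of_homog0 hwi0'⟩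
    obtain ⟨cj, hwjC⟩ : ∃ c, wj = C c := ⟨_, eq_C_of_homog0 hwj0'⟩
    have hcj : cj ≠ 0 := by
      intro h0; rw [h0, C_0] at hwjC; exact hwj0 hwjC
    rw [hwiC] at hwi
    rw [hwjC] at hwj
    have key : C cj * h i = C ci * h j := by
      rw [hwi, hwj]; ring
    have := congrArg (coeff (Finsupp.single (Sum.inl i) 1 + Finsupp.single (Sum.inr ()) 1)) key
    rw [coeff_C_mul, coeff_C_mul, hcoeff i i, hcoeff j i, if_pos rfl,
      if_neg (fun h' => hij h'.symm), mul_zero] at this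
    rcases mul_eq_zero.mp this with h0 | h0
    · exact hcj h0
    · exact hμ h0
end

section
/- Consider the 3×3 matrix J(f₀,f₁,f₂) with rows (f₀+f₁, f₂, 0), (f₁, f₀+f₂, 0), (f₁, f₂, f₀) (network C₁&C₂). If f₁ ≠ 0, f₂ ≠ 0 and f₁+f₂ ≠ 0, then f₀ is an eigenvalue with algebraic and geometric multiplicity 2, with eigenvectors (-f₂/f₁, 1, 0) and (0, 0, 1), and f₀+f₁+f₂ is a simple eigenvalue with eigenvector (1,1,1). -/
open Polynomial Matrix

/-- for the matrix `J` of network `C₁&C₂`, if `f₁ ≠ 0`, `f₂ ≠ 0` and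
`f₁+f₂ ≠ 0`, then `f₀` is an eigenvalue with algebraic and geometric multiplicity 2
with the stated eigenvectors, and `f₀+f₁+f₂` is simple with eigenvector `(1,1,1)`. -/
theorem stmt_13 (f₀ f₁ f₂ : ℝ) (h1 : f₁ ≠ 0) (h2 : f₂ ≠ 0) (h12 : f₁ + f₂ ≠ 0)
    (J : Matrix (Fin 3) (Fin 3) ℝ)
    (hJ : J = !![f₀ + f₁, f₂, 0; f₁, f₀ + f₂, 0; f₁, f₂, f₀]) :
    J.charpoly.rootMultiplicity f₀ = 2 ∧
    Module.finrank ℝ (LinearMap.ker (Matrix.toLin' (J - f₀ • 1))) = 2 ∧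
    J.mulVec ![-f₂ / f₁, 1, 0] = f₀ • ![-f₂ / f₁, 1, 0] ∧
    J.mulVec ![0, 0, 1] = f₀ • ![0, 0, 1] ∧
    J.charpoly.rootMultiplicity (f₀ + f₁ + f₂) = 1 ∧
    J.mulVec ![1, 1, 1] = (f₀ + f₁ + f₂) • ![1, 1, 1] := by
  have hcp : J.charpoly = (X - C f₀)^2 * (X - C (f₀ + f₁ + f₂)) := by
    subst hJ
    rw [Matrix.charpoly, Matrix.det_fin_three]
    simp [charmatrix_apply, Matrix.one_apply]
    ring
  have hne : f₀ ≠ f₀ + f₁ + f₂ := by intro h; apply h12; linarith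
  have hpne : ((X - C f₀)^2 : ℝ[X]) ≠ 0 := pow_ne_zero _ (X_sub_C_ne_zero _)
  have hqne : ((X - C (f₀ + f₁ + f₂)) : ℝ[X]) ≠ 0 := X_sub_C_ne_zero _
  refine ⟨?_, ?_, ?_, ?_, ?_, ?_⟩
  · rw [hcp, Polynomial.rootMultiplicity_mul (mul_ne_zero hpne hqne),
      Polynomial.rootMultiplicity_X_sub_C_pow, Polynomial.rootMultiplicity_X_sub_C]
    simp [hne]
  · -- kernel dimension
    set φ : (Fin 3 → ℝ) →ₗ[ℝ] ℝ := f₁ • LinearMap.proj 0 + f₂ • LinearMap.proj 1 with hφ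
    have hker : LinearMap.ker (Matrix.toLin' (J - f₀ • 1)) = LinearMap.ker φ := by
      ext x
      subst hJ
      simp only [LinearMap.mem_ker, Matrix.toLin'_apply, hφ, LinearMap.add_apply,
        LinearMap.smul_apply, LinearMap.proj_apply, smul_eq_mul]
      constructor
      · intro h
        have := congrFun h 0
        simpa [Matrix.mulVec, dotProduct, Fin.sum_univ_three, Matrix.one_apply,
          Matrix.sub_apply, Matrix.smul_apply] using this
      · intro h
        funext i
        fin_cases i <;>
          simp [Matrix.mulVec, dotProduct, Fin.sum_univ_three, Matrix.one_apply,
            Matrix.sub_apply, Matrix.smul_apply] <;> linarith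
    rw [hker]
    have hsurj : Function.Surjective φ := by
      intro c
      refine ⟨![c / f₁, 0, 0], ?_⟩
      simp [hφ]
      field_simp
    have := LinearMap.finrank_range_add_finrank_ker φ
    rw [LinearMap.range_eq_top.mpr hsurj] at this
    simp only [finrank_top, Module.finrank_self, Module.finrank_pi, Fintype.card_fin] at this
    omega
  · subst hJ
    funext i
    fin_cases i <;>
      simp [Matrix.mulVec, dotProduct, Fin.sum_univ_three] <;> field_simp <;> ring
  · subst hJ
    funext i
    fin_cases i <;> simp [Matrix.mulVec, dotProduct, Fin.sum_univ_three]
  · have h0 : Polynomial.rootMultiplicity (f₀ + f₁ + f₂) ((X - C f₀)^2 : ℝ[X]) = 0 := by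
      apply Polynomial.rootMultiplicity_eq_zero
      simp only [Polynomial.IsRoot, Polynomial.eval_pow, Polynomial.eval_sub,
        Polynomial.eval_X, Polynomial.eval_C]
      intro h
      exact hne (by nlinarith [sq_nonneg (f₀ + f₁ + f₂ - f₀)])
    rw [hcp, Polynomial.rootMultiplicity_mul (mul_ne_zero hpne hqne), h0,
      Polynomial.rootMultiplicity_X_sub_C]
    simp
  · subst hJ
    funext i
    fin_cases i <;> simp [Matrix.mulVec, dotProduct, Fin.sum_univ_three] <;> ring
end

section
/- Consider the 3×3 matrix J(f₀,f₁,f₂) with rows (f₀+f₁, f₂, 0), (f₁, f₀, f₂), (f₁+f₂, 0, f₀) (network C₁&A₂). If f₂ ≠ 0, then the two eigenvalues of J other than f₀+f₁+f₂ are non-real complex conjugates; explicitly, the quadratic factor of the characteristic polynomial has discriminant α₁² - 4α₀ = -3f₂² < 0, where α₀ = det(J)/(f₀+f₁+f₂) and α₁ = tr(J) - (f₀+f₁+f₂), assuming also f₀+f₁+f₂ ≠ 0. -/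
open Polynomial

/-- for the matrix `J` of network `C₁&A₂`, if `f₂ ≠ 0` and
`υ = f₀+f₁+f₂ ≠ 0`, the quadratic factor of the characteristic polynomial has
discriminant `α₁² - 4α₀ = -3f₂² < 0`, and the two eigenvalues other than `υ` are
non-real complex conjugates. -/
theorem stmt_14 (f₀ f₁ f₂ : ℝ) (h2 : f₂ ≠ 0) (hυ : f₀ + f₁ + f₂ ≠ 0)
    (J : Matrix (Fin 3) (Fin 3) ℝ)
    (hJ : J = !![f₀ + f₁, f₂, 0; f₁, f₀, f₂; f₁ + f₂, 0, f₀])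
    (α₀ α₁ : ℝ) (hα₀ : α₀ = J.det / (f₀ + f₁ + f₂))
    (hα₁ : α₁ = J.trace - (f₀ + f₁ + f₂)) :
    α₁ ^ 2 - 4 * α₀ = -3 * f₂ ^ 2 ∧ α₁ ^ 2 - 4 * α₀ < 0 ∧
    ∃ z : ℂ, z.im ≠ 0 ∧
      (J.map (algebraMap ℝ ℂ)).charpoly =
        (X - C ((f₀ : ℂ) + f₁ + f₂)) * (X - C z) * (X - C ((starRingEnd ℂ) z)) := by
  have hdet : J.det = (f₀ + f₁ + f₂) * (f₀ ^ 2 - f₀ * f₂ + f₂ ^ 2) := by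
    rw [hJ, Matrix.det_fin_three]
    simp [Matrix.cons_val_zero, Matrix.cons_val_one]
    ring
  have htr : J.trace = 3 * f₀ + f₁ := by
    rw [hJ, Matrix.trace_fin_three]
    simp
    ring
  have hα₀e : α₀ = f₀ ^ 2 - f₀ * f₂ + f₂ ^ 2 := by
    rw [hα₀, hdet, mul_comm, mul_div_assoc, div_self hυ, mul_one]
  have hα₁e : α₁ = 2 * f₀ - f₂ := by rw [hα₁, htr]; ring
  have hdisc : α₁ ^ 2 - 4 * α₀ = -3 * f₂ ^ 2 := by
    rw [hα₀e, hα₁e]; ring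
  have hs2 : Real.sqrt 3 * Real.sqrt 3 = 3 := Real.mul_self_sqrt (by norm_num)
  have hpos : (0:ℝ) < f₂ ^ 2 := by positivity
  refine ⟨hdisc, by rw [hdisc]; linarith, ?_⟩
  refine ⟨(f₀ - f₂ / 2 : ℝ) + (Real.sqrt 3 * f₂ / 2 : ℝ) * Complex.I, ?_, ?_⟩
  · have hb : (Real.sqrt 3 * f₂ / 2) ≠ 0 :=
      div_ne_zero (mul_ne_zero (by positivity) h2) two_ne_zero
    simpa using hb
  · have hconj : (starRingEnd ℂ) ((f₀ - f₂ / 2 : ℝ) + (Real.sqrt 3 * f₂ / 2 : ℝ) * Complex.I)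
        = (f₀ - f₂ / 2 : ℝ) - (Real.sqrt 3 * f₂ / 2 : ℝ) * Complex.I := by
      rw [map_add, map_mul, Complex.conj_ofReal, Complex.conj_ofReal, Complex.conj_I]
      ring
    rw [hconj, hJ]
    apply Polynomial.funext
    intro x
    simp only [Matrix.charpoly, Matrix.det_fin_three, Matrix.charmatrix_apply,
      Matrix.diagonal_apply, Matrix.map_apply, Matrix.cons_val', Matrix.cons_val_zero,
      Matrix.cons_val_one, Matrix.head_cons, Matrix.empty_val',
      Matrix.cons_val_fin_one, Matrix.head_fin_const, Matrix.cons_val_two,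
      Matrix.tail_cons, Complex.coe_algebraMap, Fin.isValue]
    norm_num [eval_sub, eval_mul, eval_add, eval_X, eval_C, eval_neg, eval_zero, eval_one]
    push_cast
    simp only [eval_zero]
    have hs2c : (Real.sqrt 3 : ℂ) * (Real.sqrt 3 : ℂ) = 3 := by norm_cast
    linear_combination (norm := ring)
      (x - ((f₀:ℂ) + f₁ + f₂)) * ((Real.sqrt 3 : ℂ) * (Real.sqrt 3 : ℂ) * (f₂:ℂ)^2 / 4) * Complex.I_sq
      - (x - ((f₀:ℂ) + f₁ + f₂)) * ((f₂:ℂ)^2 / 4) * hs2c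
end

section
/- Let J be a 3×3 real matrix with constant row sum υ whose eigenvalue μ ≠ υ has geometric multiplicity 2. Then ℝ³ = span{(1,1,1)} ⊕ E_μ where E_μ = ker(J - μ·Id), and every polydiagonal subspace of ℝ³ is invariant under J. -/
/-- A polydiagonal subspace of `ℝⁿ` is a subspace cut out by coordinate equalities. -/
def IsPolydiagonal {n : ℕ} (V : Submodule ℝ (Fin n → ℝ)) : Prop :=
  ∃ r : Fin n → Fin n → Prop, ∀ x : Fin n → ℝ, x ∈ V ↔ ∀ i j, r i j → x i = x j

/-- if a 3×3 real matrix `J` with constant row sum `υ` has an eigenvalue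
`μ ≠ υ` of geometric multiplicity 2, then `ℝ³ = span{(1,1,1)} ⊕ E_μ` and every
polydiagonal subspace of `ℝ³` is invariant under `J`. -/
theorem stmt_17 (J : Matrix (Fin 3) (Fin 3) ℝ) (υ μ : ℝ)
    (hrow : ∀ i, ∑ j, J i j = υ) (hμ : μ ≠ υ)
    (hgeo : Module.finrank ℝ (LinearMap.ker (Matrix.toLin' (J - μ • 1))) = 2) :
    IsCompl (Submodule.span ℝ {(fun _ => (1 : ℝ) : Fin 3 → ℝ)})
      (LinearMap.ker (Matrix.toLin' (J - μ • 1))) ∧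
    ∀ Δ : Submodule ℝ (Fin 3 → ℝ), IsPolydiagonal Δ → ∀ x ∈ Δ, J.mulVec x ∈ Δ := by
  set f := Matrix.toLin' (J - μ • 1) with hf
  set c : Fin 3 → ℝ := fun _ => 1 with hc
  have hcne : c ≠ 0 := by
    intro h
    have := congrFun h 0
    simp [hc] at this
  have hυμ : υ - μ ≠ 0 := sub_ne_zero.mpr (Ne.symm hμ)
  have hone : ∀ x : Fin 3 → ℝ, f x = J.mulVec x - μ • x := by
    intro x
    simp [hf, Matrix.toLin'_apply, Matrix.sub_mulVec, Matrix.smul_mulVec,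
      Matrix.one_mulVec]
  have hw : f c = (υ - μ) • c := by
    rw [hone]
    funext i
    simp [hc, Matrix.mulVec, dotProduct, hrow i]
  -- the range of f is span {c}
  have hdim3 : Module.finrank ℝ (Fin 3 → ℝ) = 3 := by simp
  have hrank : Module.finrank ℝ (LinearMap.range f) = 1 := by
    have := LinearMap.finrank_range_add_finrank_ker f
    rw [hdim3, hgeo] at this
    omega
  have hcmem : c ∈ LinearMap.range f := by
    refine ⟨(υ - μ)⁻¹ • c, ?_⟩
    rw [map_smul, hw, smul_smul, inv_mul_cancel₀ hυμ, one_smul]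
  have hle : Submodule.span ℝ {c} ≤ LinearMap.range f := by
    rw [Submodule.span_singleton_le_iff_mem]; exact hcmem
  have hrange : LinearMap.range f = Submodule.span ℝ {c} := by
    refine (Submodule.eq_of_le_of_finrank_le hle ?_).symm
    rw [hrank, finrank_span_singleton hcne]
  -- invariance part
  have hinv : ∀ Δ : Submodule ℝ (Fin 3 → ℝ), IsPolydiagonal Δ → ∀ x ∈ Δ, J.mulVec x ∈ Δ := by
    intro Δ ⟨r, hr⟩ x hx
    have hcΔ : c ∈ Δ := (hr c).2 (fun i j _ => rfl)
    have hfx : f x ∈ Submodule.span ℝ {c} := hrange ▸ LinearMap.mem_range_self f x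
    obtain ⟨a, ha⟩ := Submodule.mem_span_singleton.mp hfx
    rw [hone] at ha
    have : J.mulVec x = a • c + μ • x := sub_eq_iff_eq_add.mp ha.symm
    rw [this]
    exact Δ.add_mem (Δ.smul_mem a hcΔ) (Δ.smul_mem μ hx)
  refine ⟨?_, hinv⟩
  -- IsCompl
  have hdisj : Disjoint (Submodule.span ℝ {c}) (LinearMap.ker f) := by
    rw [Submodule.disjoint_def]
    intro x hx hk
    obtain ⟨a, ha⟩ := Submodule.mem_span_singleton.mp hx
    have h0 : f x = 0 := hk
    rw [← ha, map_smul, hw, smul_smul] at h0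
    have := congrFun h0 0
    simp [hc] at this
    rcases this with h | h
    · rw [← ha, h, zero_smul]
    · exact absurd h hυμ
  refine ⟨hdisj, ?_⟩
  rw [codisjoint_iff]
  have hsum := Submodule.finrank_sup_add_finrank_inf_eq (Submodule.span ℝ {c})
    (LinearMap.ker f)
  rw [disjoint_iff.mp hdisj, finrank_bot, finrank_span_singleton hcne, hgeo] at hsum
  apply Submodule.eq_top_of_finrank_eq
  rw [hdim3]
  omega
end

section
/- Let N be a network with n cells and μ a semisimple eigenvalue of all admissible Jacobians such that ℝⁿ = Δ ⊕ E_μ for some synchrony subspace Δ, where E_μ is the μ-eigenspace. Then every polydiagonal subspace Δ' of ℝⁿ containing Δ is invariant under every matrix of the form J = f₀·Id + Σ_j f_j A_j. Concretely: if Δ ⊆ Δ' with Δ' polydiagonal and ℝⁿ = Δ ⊕ E_μ with both Δ and E_μ invariant under J, then Δ' = Δ ⊕ (Δ' ∩ E_μ) and Δ' is J-invariant. -/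
/-- if `ℝⁿ = Δ ⊕ E_μ` with `Δ` a `J`-invariant (synchrony) polydiagonal
subspace and `J` acting as `μ·Id` on `E_μ`, then every polydiagonal `Δ'` containing `Δ`
satisfies `Δ' = Δ ⊕ (Δ' ∩ E_μ)` and is `J`-invariant. -/
theorem stmt_18 (n : ℕ) (μ : ℝ) (J : (Fin n → ℝ) →ₗ[ℝ] (Fin n → ℝ))
    (Δ Eμ Δ' : Submodule ℝ (Fin n → ℝ))
    (hpolyΔ : IsPolydiagonal Δ) (hpolyΔ' : IsPolydiagonal Δ')
    (hcompl : IsCompl Δ Eμ)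
    (hΔinv : ∀ x ∈ Δ, J x ∈ Δ)
    (hE : ∀ x ∈ Eμ, J x = μ • x)
    (hle : Δ ≤ Δ') :
    Δ' = Δ ⊔ (Δ' ⊓ Eμ) ∧ ∀ x ∈ Δ', J x ∈ Δ' := by
  have heq : Δ' = Δ ⊔ (Δ' ⊓ Eμ) := by
    have := sup_inf_assoc_of_le Eμ hle
    rw [hcompl.codisjoint.eq_top, top_inf_eq] at this
    rw [inf_comm Eμ Δ'] at this; exact this
  refine ⟨heq, fun x hx => ?_⟩
  rw [heq] at hx
  rcases Submodule.mem_sup.mp hx with ⟨a, ha, b, hb, rfl⟩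
  rw [map_add, hE b hb.2]
  exact Submodule.add_mem _ (hle (hΔinv a ha)) (Submodule.smul_mem _ _ hb.1)
end
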